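/- Let k be a field, c ∈ k. The k-algebra homomorphism from k[X,Y]/(Y² − X³ − cX²) to k[z] induced by X ↦ z² − c, Y ↦ z³ − cz is injective, and it is an isomorphism of k-algebras onto the subalgebra Algebra.adjoin k {z² − c, z³ − cz} of k[z]. -/

import Mathlib

open Polynomial

section Aux

variable {k : Type*} [Field k] (c : k)

private lemma parity_key (a b : k[X])
    (hab : a.comp (X^2 - C c) + b.comp (X^2 - C c) * (X * (X^2 - C c)) = 0) :
    a = 0 ∧ b = 0 := by
  set u : k[X] := X - C c with hu
  have hw : (X^2 - C c : k[X]) = u.comp (X^2) := by simp [hu, sub_comp]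
  set a' : k[X] := a.comp u with ha'
  set b' : k[X] := b.comp u * u with hb'
  have h1 : a.comp (X^2 - C c) = expand k 2 a' := by
    rw [hw, ← comp_assoc, expand_eq_comp_X_pow]
  have h2 : b.comp (X^2 - C c) * (X^2 - C c) = expand k 2 b' := by
    rw [hw, ← comp_assoc, hb', map_mul, expand_eq_comp_X_pow, expand_eq_comp_X_pow]
  have hab' : expand k 2 a' + X * expand k 2 b' = 0 := by
    rw [← h1, ← h2]; ring_nf; ring_nf at hab; linear_combination hab
  have key : a' = 0 ∧ b' = 0 := by
    have hcoe : ∀ n, (expand k 2 a').coeff n + (X * expand k 2 b').coeff n = 0 := by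
      intro n; rw [← coeff_add, hab', coeff_zero]
    have hXmul : ∀ (q : k[X]) (n : ℕ), (X * q).coeff n = if n = 0 then 0 else q.coeff (n-1) := by
      intro q n
      cases n with
      | zero => simp
      | succ m => simp [coeff_X_mul]
    constructor
    · ext m
      have := hcoe (2 * m)
      rw [coeff_expand (by norm_num), hXmul] at this
      rcases Nat.eq_zero_or_pos m with hm | hm
      · subst hm; simpa using this
      · have h2 : ¬ (2 ∣ 2*m - 1) := by omega
        simp only [if_pos (dvd_mul_right 2 m),
          Nat.mul_div_cancel_left m (by norm_num : 0 < 2)] at this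
        rw [if_neg (by omega), coeff_expand (by norm_num), if_neg h2] at this
        simpa using this
    · ext m
      have := hcoe (2 * m + 1)
      have h2 : ¬ (2 ∣ 2*m + 1) := by omega
      rw [coeff_expand (by norm_num), if_neg h2, hXmul, if_neg (by omega),
        coeff_expand (by norm_num)] at this
      simp only [Nat.add_sub_cancel, if_pos (dvd_mul_right 2 m),
        Nat.mul_div_cancel_left m (by norm_num : 0 < 2)] at this
      simpa using this
  have hu0 : u ≠ 0 := by
    intro h0
    have := congrArg (fun p : k[X] => p.coeff 1) h0
    simp [hu] at this
  have hcompinv : ∀ p : k[X], p.comp u = 0 → p = 0 := by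
    intro p hp
    have : p = (p.comp u).comp (X + C c) := by
      rw [comp_assoc]; simp [hu, sub_comp, add_comp]
    rw [this, hp, zero_comp]
  constructor
  · exact hcompinv a key.1
  · have : b.comp u = 0 := by
      rcases mul_eq_zero.mp key.2 with h | h
      · exact h
      · exact absurd h hu0
    exact hcompinv b this

/-- The evaluation map `(k[X])[Y] → k[X]`, `Y ↦ X³ − cX`, coefficients via `X ↦ X² − c`. -/
noncomputable def evmap : Polynomial k[X] →ₐ[k] k[X] :=
  Polynomial.aevalTower (Polynomial.aeval (X^2 - C c)) (X^3 - C c * X)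

private lemma ev_ker (F : Polynomial k[X]) (hF : evmap c F = 0) :
    F ∈ Ideal.span {(X : Polynomial k[X])^2 - Polynomial.C (X^3 + C c * X^2)} := by
  set G : Polynomial k[X] := X^2 - Polynomial.C (X^3 + C c * X^2) with hGdef
  have hG : G.Monic := monic_X_pow_sub_C _ two_ne_zero
  have hevG : evmap c G = 0 := by
    simp only [hGdef, evmap, map_sub, map_pow, aevalTower_X, aevalTower_C,
      map_add, map_mul, aeval_X, aeval_C]
    ring_nf
    simp [algebraMap_eq]
    ring
  set r : Polynomial k[X] := F %ₘ G with hrdef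
  have hFr : r + G * (F /ₘ G) = F := modByMonic_add_div F G
  have hevr : evmap c r = 0 := by
    have := congrArg (evmap c) hFr
    rw [map_add, map_mul, hevG, zero_mul, add_zero, hF] at this
    exact this
  have hdeg : r.degree ≤ 1 := by
    have h2 : G.degree = 2 := degree_X_pow_sub_C (by norm_num) _
    have := degree_modByMonic_lt F hG
    rw [h2] at this
    exact Order.le_of_lt_succ (by exact_mod_cast this)
  have hr1 : r = Polynomial.C (r.coeff 1) * X + Polynomial.C (r.coeff 0) :=
    eq_X_add_C_of_degree_le_one hdeg
  set a : k[X] := r.coeff 0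
  set b : k[X] := r.coeff 1
  have heq : a.comp (X^2 - C c) + b.comp (X^2 - C c) * (X * (X^2 - C c)) = 0 := by
    have := hevr
    rw [hr1] at this
    simp only [evmap, map_add, map_mul, aevalTower_X, aevalTower_C] at this
    rw [comp_eq_aeval, comp_eq_aeval]
    linear_combination this
  obtain ⟨ha, hb⟩ := parity_key c a b heq
  have hr0 : r = 0 := by rw [hr1, ha, hb]; simp
  rw [← hFr, hr0, zero_add]
  exact Ideal.mem_span_singleton.mpr (Dvd.intro _ rfl)

/-- `k[X,Y] → (k[X])[Y]`, `X 0 ↦ C X`, `X 1 ↦ Y`. -/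
noncomputable def sig : MvPolynomial (Fin 2) k →ₐ[k] Polynomial k[X] :=
  MvPolynomial.aeval ![Polynomial.C X, X]

/-- `(k[X])[Y] → k[X,Y]`, the inverse of `sig`. -/
noncomputable def tau : Polynomial k[X] →ₐ[k] MvPolynomial (Fin 2) k :=
  Polynomial.aevalTower (Polynomial.aeval (MvPolynomial.X 0)) (MvPolynomial.X 1)

private lemma tau_sig (p : MvPolynomial (Fin 2) k) : tau (sig p) = p := by
  have : (tau.comp sig : MvPolynomial (Fin 2) k →ₐ[k] MvPolynomial (Fin 2) k)
      = AlgHom.id k _ := by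
    apply MvPolynomial.algHom_ext
    intro i
    fin_cases i <;> simp [tau, sig]
  exact DFunLike.congr_fun this p

private lemma phi_eq (p : MvPolynomial (Fin 2) k) :
    (MvPolynomial.aeval ![X ^ 2 - C c, X ^ 3 - C c * X] : MvPolynomial (Fin 2) k →ₐ[k] k[X]) p
      = evmap c (sig p) := by
  have : (MvPolynomial.aeval ![X ^ 2 - C c, X ^ 3 - C c * X] : MvPolynomial (Fin 2) k →ₐ[k] k[X])
      = (evmap c).comp sig := by
    apply MvPolynomial.algHom_ext
    intro i
    fin_cases i <;> simp [evmap, sig]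
  rw [this]; rfl

private lemma tau_G : tau ((X : Polynomial k[X])^2 - Polynomial.C (X^3 + C c * X^2))
    = (MvPolynomial.X 1 : MvPolynomial (Fin 2) k) ^ 2
        - (MvPolynomial.X 0) ^ 3 - MvPolynomial.C c * (MvPolynomial.X 0) ^ 2 := by
  simp only [tau, map_sub, map_pow, aevalTower_X, aevalTower_C, map_add, map_mul, aeval_X, aeval_C]
  rw [MvPolynomial.algebraMap_eq]
  ring

private lemma ker_phi (p : MvPolynomial (Fin 2) k)
    (hp : (MvPolynomial.aeval ![X ^ 2 - C c, X ^ 3 - C c * X] :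
        MvPolynomial (Fin 2) k →ₐ[k] k[X]) p = 0) :
    p ∈ Ideal.span {(MvPolynomial.X 1 : MvPolynomial (Fin 2) k) ^ 2
          - (MvPolynomial.X 0) ^ 3 - MvPolynomial.C c * (MvPolynomial.X 0) ^ 2} := by
  rw [phi_eq] at hp
  obtain ⟨q, hq⟩ := Ideal.mem_span_singleton.mp (ev_ker c (sig p) hp)
  have : p = ((MvPolynomial.X 1 : MvPolynomial (Fin 2) k) ^ 2
        - (MvPolynomial.X 0) ^ 3 - MvPolynomial.C c * (MvPolynomial.X 0) ^ 2) * tau q := by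
    rw [← tau_G, ← map_mul, ← hq, tau_sig]
  exact Ideal.mem_span_singleton.mpr ⟨tau q, this⟩

end Aux

/-- Let `k` be a field, `c ∈ k`. The `k`-algebra homomorphism from
`k[X,Y]/(Y² − X³ − cX²)` to `k[z]` induced by `X ↦ z² − c`, `Y ↦ z³ − cz` is injective,
and it is an isomorphism onto the subalgebra `Algebra.adjoin k {z² − c, z³ − cz}` of
`k[z]`, i.e. its range is exactly that subalgebra. -/
theorem quotient_map_injective_range_adjoin (k : Type*) [Field k] (c : k)
    (h : ∀ a ∈ Ideal.span {(MvPolynomial.X 1 : MvPolynomial (Fin 2) k) ^ 2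
          - (MvPolynomial.X 0) ^ 3 - MvPolynomial.C c * (MvPolynomial.X 0) ^ 2},
        (MvPolynomial.aeval ![X ^ 2 - C c, X ^ 3 - C c * X] : MvPolynomial (Fin 2) k →ₐ[k] k[X]) a
          = 0) :
    Function.Injective
        (Ideal.Quotient.liftₐ _
          (MvPolynomial.aeval ![X ^ 2 - C c, X ^ 3 - C c * X] : MvPolynomial (Fin 2) k →ₐ[k] k[X])
          h) ∧
      (Ideal.Quotient.liftₐ _
          (MvPolynomial.aeval ![X ^ 2 - C c, X ^ 3 - C c * X] : MvPolynomial (Fin 2) k →ₐ[k] k[X])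
          h).range
        = Algebra.adjoin k ({X ^ 2 - C c, X ^ 3 - C c * X} : Set k[X]) := by
  set I := Ideal.span {(MvPolynomial.X 1 : MvPolynomial (Fin 2) k) ^ 2
          - (MvPolynomial.X 0) ^ 3 - MvPolynomial.C c * (MvPolynomial.X 0) ^ 2} with hI
  set φ := (MvPolynomial.aeval ![X ^ 2 - C c, X ^ 3 - C c * X] :
      MvPolynomial (Fin 2) k →ₐ[k] k[X]) with hφ
  have hlift : ∀ p : MvPolynomial (Fin 2) k,
      Ideal.Quotient.liftₐ I φ h (Ideal.Quotient.mk I p) = φ p := fun p => by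
    rw [Ideal.Quotient.liftₐ_apply]
    exact Ideal.Quotient.lift_mk I (φ : MvPolynomial (Fin 2) k →+* k[X]) h
  constructor
  · intro x y hxy
    obtain ⟨p, rfl⟩ := Ideal.Quotient.mk_surjective x
    obtain ⟨q, rfl⟩ := Ideal.Quotient.mk_surjective y
    rw [hlift, hlift] at hxy
    have : φ (p - q) = 0 := by rw [map_sub, hxy, sub_self]
    exact Ideal.Quotient.eq.mpr (ker_phi c (p - q) this)
  · have hrange : (Ideal.Quotient.liftₐ I φ h).range = φ.range := by
      ext x
      constructor
      · rintro ⟨y, rfl⟩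
        obtain ⟨p, rfl⟩ := Ideal.Quotient.mk_surjective y
        exact ⟨p, (hlift p).symm⟩
      · rintro ⟨p, rfl⟩
        exact ⟨Ideal.Quotient.mk I p, hlift p⟩
    rw [hrange, hφ, ← Algebra.adjoin_range_eq_range_aeval]
    congr 1
    ext z
    constructor
    · rintro ⟨i, rfl⟩
      fin_cases i <;> simp
    · rintro (rfl | rfl)
      · exact ⟨0, rfl⟩
      · exact ⟨1, rfl⟩
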